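/- (Corollary 1: exponential NE seeking without attacks.) Under the game setup, assume: the pseudo-gradient F is ε-strongly monotone (ε > 0) and ι-Lipschitz, each partial-gradient map F_i : E → E_i is ι-Lipschitz, and x* ∈ E satisfies F(x*) = 0. Let L be an N×N real matrix with L·1_N = 0 and 1_Nᵀ·L = 0, and suppose λ₂ > 0 satisfies vᵀ((L+Lᵀ)/2)v ≥ λ₂‖v‖² for every v ∈ ℝ^N with Σ_i v_i = 0. Let X̃_i = x* for all i, G(X)_i = −ι_i(F_i(X_i)) − κ Σ_j L_{ij} X_j, and assume κ > (ι²/ε + ι)/λ₂. Then there exists λ > 0 such that every differentiable curve x : [t₀,∞) → E^N satisfying x′(t) = G(x(t)) for all t ≥ t₀ obeys ‖x(t) − X̃‖ ≤ e^{−λ(t−t₀)} ‖x(t₀) − X̃‖ for all t ≥ t₀; in particular every player's estimate converges exponentially to the Nash equilibrium x* from any initial condition. -/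

import Mathlib

open Matrix
open scoped RealInnerProductSpace

set_option maxHeartbeats 2000000

noncomputable section

/-- The profile space `E = E_1 × ⋯ × E_N` with the product (ℓ²) inner product,
where `E_i = ℝ^{n i}`. -/
abbrev GSpace {N : ℕ} (n : Fin N → ℕ) : Type :=
  PiLp 2 (fun j : Fin N => EuclideanSpace ℝ (Fin (n j)))

/-- The stacked space `E^N` with the product (ℓ²) inner product. -/
abbrev Stacked {N : ℕ} (n : Fin N → ℕ) : Type :=
  PiLp 2 (fun _ : Fin N => GSpace n)

/-- `ι_i`: the linear embedding of `E_i` into `E` placing a vector in the `i`-th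
block and zero elsewhere. -/
def blockEmb {N : ℕ} (n : Fin N → ℕ) (i : Fin N)
    (z : EuclideanSpace ℝ (Fin (n i))) : GSpace n :=
  WithLp.toLp 2 (Pi.single i z)

/-! ### Auxiliary lemmas -/

lemma aux_le_of_sq_le_sq {a b : ℝ} (hb : 0 ≤ b) (h : a ^ 2 ≤ b ^ 2) (ha : 0 ≤ a) : a ≤ b := by
  nlinarith

lemma aux_norm_sq_piLp {ι₂ : Type} [Fintype ι₂] {α : ι₂ → Type*} [∀ i, NormedAddCommGroup (α i)]
    [∀ i, InnerProductSpace ℝ (α i)] (u : PiLp 2 α) : ‖u‖ ^ 2 = ∑ i, ‖u i‖ ^ 2 := by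
  rw [← real_inner_self_eq_norm_sq, PiLp.inner_apply]
  exact Finset.sum_congr rfl fun i _ => real_inner_self_eq_norm_sq _

lemma aux_inner_gspace {N : ℕ} {n : Fin N → ℕ} (a b : GSpace n) :
    ⟪a, b⟫ = ∑ j, ∑ k, a j k * b j k := by
  simp [PiLp.inner_apply, RCLike.inner_apply]
  exact Finset.sum_congr rfl fun j _ => Finset.sum_congr rfl fun k _ => mul_comm _ _

lemma aux_norm_sq_gspace {N : ℕ} {n : Fin N → ℕ} (a : GSpace n) :
    ‖a‖ ^ 2 = ∑ j, ∑ k, (a j k) ^ 2 := by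
  rw [← real_inner_self_eq_norm_sq, aux_inner_gspace]
  simp only [sq]

lemma aux_inner_blockEmb {N : ℕ} {n : Fin N → ℕ} (y : GSpace n) (i : Fin N)
    (z : EuclideanSpace ℝ (Fin (n i))) :
    ⟪y, blockEmb n i z⟫ = ⟪y i, z⟫ := by
  rw [PiLp.inner_apply, Finset.sum_eq_single i]
  · simp [blockEmb]
  · intro j _ hj; simp [blockEmb, Pi.single_eq_of_ne hj]
  · simp

lemma aux_inner_ge_neg {E' : Type*} [NormedAddCommGroup E'] [InnerProductSpace ℝ E']
    (u v : E') : -(‖u‖ * ‖v‖) ≤ ⟪u, v⟫ := by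
  have h := abs_real_inner_le_norm u v
  have h2 := neg_abs_le (⟪u, v⟫ : ℝ)
  linarith

/-- Scalar vectorized spectral-gap inequality. -/
lemma aux_gap_scalar {N : ℕ} {ι₂ : Type*} [Fintype ι₂] (L : Matrix (Fin N) (Fin N) ℝ)
    (lam₂ : ℝ)
    (hgap : ∀ v : Fin N → ℝ, ∑ i, v i = 0 →
      lam₂ * (v ⬝ᵥ v) ≤ v ⬝ᵥ ((((2:ℝ)⁻¹) • (L + Lᵀ)).mulVec v))
    (u : Fin N → ι₂ → ℝ) (hu : ∀ s, ∑ i, u i s = 0) :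
    lam₂ * ∑ i, ∑ s, u i s ^ 2 ≤ ∑ i, ∑ j, L i j * ∑ s, u i s * u j s := by
  have step : ∀ s : ι₂, lam₂ * ∑ i, u i s ^ 2 ≤
      ∑ i, ∑ j, (2⁻¹ * (L i j + L j i)) * (u i s * u j s) := by
    intro s
    have h := hgap (fun i => u i s) (hu s)
    calc lam₂ * ∑ i, u i s ^ 2 = lam₂ * ((fun i => u i s) ⬝ᵥ fun i => u i s) := by
          simp [dotProduct, sq]
      _ ≤ _ := h
      _ = ∑ i, ∑ j, (2⁻¹ * (L i j + L j i)) * (u i s * u j s) := by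
          simp only [dotProduct, Matrix.mulVec, Matrix.smul_apply, Matrix.add_apply,
            Matrix.transpose_apply, smul_eq_mul, Finset.mul_sum]
          exact Finset.sum_congr rfl fun i _ => Finset.sum_congr rfl fun j _ => by ring
  have total : ∑ s, lam₂ * ∑ i, u i s ^ 2 ≤
      ∑ s, ∑ i, ∑ j, (2⁻¹ * (L i j + L j i)) * (u i s * u j s) :=
    Finset.sum_le_sum fun s _ => step s
  have h2 : ∑ i, ∑ j, L j i * ∑ s, u i s * u j s =
      ∑ i, ∑ j, L i j * ∑ s, u i s * u j s := by
    rw [Finset.sum_comm]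
    refine Finset.sum_congr rfl fun a _ => Finset.sum_congr rfl fun b _ => ?_
    congr 1
    exact Finset.sum_congr rfl fun s _ => by ring
  calc lam₂ * ∑ i, ∑ s, u i s ^ 2 = lam₂ * ∑ s, ∑ i, u i s ^ 2 := by rw [Finset.sum_comm]
    _ = ∑ s, lam₂ * ∑ i, u i s ^ 2 := Finset.mul_sum _ _ _
    _ ≤ ∑ s, ∑ i, ∑ j, (2⁻¹ * (L i j + L j i)) * (u i s * u j s) := total
    _ = ∑ i, ∑ j, (2⁻¹ * (L i j + L j i)) * ∑ s, u i s * u j s := by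
        rw [Finset.sum_comm]
        refine Finset.sum_congr rfl fun i _ => ?_
        rw [Finset.sum_comm]
        refine Finset.sum_congr rfl fun j _ => ?_
        rw [Finset.mul_sum]
    _ = ∑ i, ∑ j, L i j * ∑ s, u i s * u j s := by
        calc ∑ i, ∑ j, (2⁻¹ * (L i j + L j i)) * ∑ s, u i s * u j s
            = ∑ i, ∑ j, (2⁻¹ * (L i j * ∑ s, u i s * u j s) +
                2⁻¹ * (L j i * ∑ s, u i s * u j s)) :=
              Finset.sum_congr rfl fun i _ => Finset.sum_congr rfl fun j _ => by ring
          _ = (∑ i, ∑ j, 2⁻¹ * (L i j * ∑ s, u i s * u j s)) +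
              (∑ i, ∑ j, 2⁻¹ * (L j i * ∑ s, u i s * u j s)) := by
              rw [← Finset.sum_add_distrib]
              exact Finset.sum_congr rfl fun i _ => Finset.sum_add_distrib
          _ = 2⁻¹ * (∑ i, ∑ j, L i j * ∑ s, u i s * u j s) +
              2⁻¹ * (∑ i, ∑ j, L j i * ∑ s, u i s * u j s) := by
              congr 1 <;>
                · rw [Finset.mul_sum]
                  exact Finset.sum_congr rfl fun i _ => (Finset.mul_sum _ _ _).symm
          _ = ∑ i, ∑ j, L i j * ∑ s, u i s * u j s := by rw [h2]; ring

/-- Vectorized spectral-gap inequality over the profile space. -/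
lemma aux_gap_vec {N : ℕ} {n : Fin N → ℕ} (L : Matrix (Fin N) (Fin N) ℝ) (lam₂ : ℝ)
    (hgap : ∀ v : Fin N → ℝ, ∑ i, v i = 0 →
      lam₂ * (v ⬝ᵥ v) ≤ v ⬝ᵥ ((((2:ℝ)⁻¹) • (L + Lᵀ)).mulVec v))
    (d : Fin N → GSpace n) (hd : ∑ i, d i = 0) :
    lam₂ * ∑ i, ‖d i‖ ^ 2 ≤ ∑ i, ∑ j, L i j * ⟪d i, d j⟫ := by
  set u : Fin N → ((j : Fin N) × Fin (n j)) → ℝ := fun i s => d i s.1 s.2 with hu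
  have hortho : ∀ a b : GSpace n,
      ⟪a, b⟫ = ∑ s : (j : Fin N) × Fin (n j), a s.1 s.2 * b s.1 s.2 := by
    intro a b
    rw [aux_inner_gspace, ← Finset.univ_sigma_univ, Finset.sum_sigma]
  have hnorm : ∀ a : GSpace n,
      ‖a‖ ^ 2 = ∑ s : (j : Fin N) × Fin (n j), (a s.1 s.2) ^ 2 := by
    intro a
    rw [aux_norm_sq_gspace, ← Finset.univ_sigma_univ, Finset.sum_sigma]
  have hu0 : ∀ s : (j : Fin N) × Fin (n j), ∑ i, u i s = 0 := by
    intro s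
    have e1 : (∑ i, d i) s.1 = ∑ i, d i s.1 := by rw [WithLp.ofLp_sum]; exact Finset.sum_apply _ _ _
    have e2 : (∑ i, d i) s.1 s.2 = ∑ i, d i s.1 s.2 := by
      rw [e1, WithLp.ofLp_sum]; exact Finset.sum_apply _ _ _
    have e3 : (∑ i, d i) s.1 s.2 = 0 := by rw [hd]; rfl
    rw [hu]
    rw [← e2]
    exact e3
  have h := aux_gap_scalar L lam₂ hgap u hu0
  calc lam₂ * ∑ i, ‖d i‖ ^ 2 = lam₂ * ∑ i, ∑ s, u i s ^ 2 := by
        congr 1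
        exact Finset.sum_congr rfl fun i _ => hnorm (d i)
    _ ≤ ∑ i, ∑ j, L i j * ∑ s, u i s * u j s := h
    _ = ∑ i, ∑ j, L i j * ⟪d i, d j⟫ := by
        refine Finset.sum_congr rfl fun i _ => Finset.sum_congr rfl fun j _ => ?_
        rw [hortho (d i) (d j)]

/-- Grönwall-type exponential decay from a dissipativity inequality. -/
lemma aux_gronwall {E' : Type*} [NormedAddCommGroup E'] [InnerProductSpace ℝ E']
    (G : E' → E') (Xt : E') (c : ℝ) (hc : 0 < c)
    (hdis : ∀ X : E', ⟪X - Xt, G X⟫ ≤ -c * ‖X - Xt‖ ^ 2)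
    (t₀ : ℝ) (x : ℝ → E') (hx : ∀ t, t₀ ≤ t → HasDerivAt x (G (x t)) t)
    (t : ℝ) (ht : t₀ ≤ t) :
    ‖x t - Xt‖ ≤ Real.exp (-c * (t - t₀)) * ‖x t₀ - Xt‖ := by
  set φ : ℝ → ℝ := fun s => Real.exp (2*c*s) * ⟪x s - Xt, x s - Xt⟫ with hφ
  have hder : ∀ s, t₀ ≤ s → HasDerivAt φ
      (Real.exp (2*c*s) * (2*c*⟪x s - Xt, x s - Xt⟫ + 2*⟪x s - Xt, G (x s)⟫)) s := by
    intro s hs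
    have h1 : HasDerivAt (fun u => x u - Xt) (G (x s)) s := (hx s hs).sub_const Xt
    have h2 : HasDerivAt (fun u => (⟪x u - Xt, x u - Xt⟫ : ℝ))
        (⟪x s - Xt, G (x s)⟫ + ⟪G (x s), x s - Xt⟫) s := h1.inner ℝ h1
    have h3 : HasDerivAt (fun u : ℝ => Real.exp (2*c*u)) (Real.exp (2*c*s) * (2*c)) s := by
      have h4 : HasDerivAt (fun u : ℝ => 2*c*u) (2*c) s := by
        simpa using (hasDerivAt_id s).const_mul (2*c)
      exact h4.exp
    have h5 := h3.mul h2
    refine h5.congr_deriv ?_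
    have h6 : (⟪G (x s), x s - Xt⟫ : ℝ) = ⟪x s - Xt, G (x s)⟫ := real_inner_comm _ _
    rw [h6]
    ring
  have hanti : AntitoneOn φ (Set.Ici t₀) := by
    apply antitoneOn_of_deriv_nonpos (convex_Ici t₀)
    · intro s hs
      exact ((hder s hs).continuousAt).continuousWithinAt
    · intro s hs
      rw [interior_Ici] at hs
      exact ((hder s (le_of_lt hs)).differentiableAt).differentiableWithinAt
    · intro s hs
      rw [interior_Ici] at hs
      rw [(hder s hs.le).deriv]
      have hd := hdis (x s)
      have hV : (⟪x s - Xt, x s - Xt⟫ : ℝ) = ‖x s - Xt‖ ^ 2 := real_inner_self_eq_norm_sq _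
      rw [hV]
      nlinarith only [mul_le_mul_of_nonneg_left hd (Real.exp_pos (2*c*s)).le,
        Real.exp_pos (2*c*s), sq_nonneg ‖x s - Xt‖, hc]
  have hφt : φ t ≤ φ t₀ := hanti (Set.self_mem_Ici) ht ht
  have h5 : Real.exp (2*c*t) * ‖x t - Xt‖ ^ 2 ≤ Real.exp (2*c*t₀) * ‖x t₀ - Xt‖ ^ 2 := by
    simpa [hφ, real_inner_self_eq_norm_sq] using hφt
  have h6 : ‖x t - Xt‖ ^ 2 ≤ (Real.exp (-c * (t - t₀)) * ‖x t₀ - Xt‖) ^ 2 := by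
    have hrw : (Real.exp (-c * (t - t₀)) * ‖x t₀ - Xt‖) ^ 2 =
        Real.exp (2*c*t₀) / Real.exp (2*c*t) * ‖x t₀ - Xt‖ ^ 2 := by
      rw [mul_pow, pow_two (Real.exp (-c * (t - t₀))), ← Real.exp_add,
        show -c * (t - t₀) + -c * (t - t₀) = 2*c*t₀ - 2*c*t from by ring, Real.exp_sub]
    rw [hrw, div_mul_eq_mul_div, le_div_iff₀ (Real.exp_pos _)]
    linarith only [h5]
  exact aux_le_of_sq_le_sq (mul_nonneg (Real.exp_pos _).le (norm_nonneg _)) h6 (norm_nonneg _)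

/-- **Corollary 1.** Without attacks, under strong monotonicity and
Lipschitz assumptions, a spectral-gap condition on `(L+Lᵀ)/2`, and
`κ > (ι²/ε + ι)/λ₂`, there exists `λ > 0` such that every solution of
`x′ = G(x)` converges exponentially to the stacked Nash equilibrium `X̃`:
`‖x(t) − X̃‖ ≤ e^{−λ(t−t₀)} ‖x(t₀) − X̃‖`. -/
theorem exponential_NE_seeking_without_attacks
    (N : ℕ) (hN : 1 ≤ N) (n : Fin N → ℕ)
    (Fp : ∀ i : Fin N, GSpace n → EuclideanSpace ℝ (Fin (n i)))
    (F : GSpace n → GSpace n) (hFdef : ∀ x i, F x i = Fp i x)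
    (ε ι : ℝ) (hε : 0 < ε) (hι : 0 < ι)
    (hmono : ∀ x y : GSpace n, ε * ‖x - y‖ ^ 2 ≤ ⟪x - y, F x - F y⟫)
    (hFLip : ∀ x y : GSpace n, ‖F x - F y‖ ≤ ι * ‖x - y‖)
    (hFpLip : ∀ i, ∀ x y : GSpace n, ‖Fp i x - Fp i y‖ ≤ ι * ‖x - y‖)
    (xstar : GSpace n) (hstar : F xstar = 0)
    (L : Matrix (Fin N) (Fin N) ℝ)
    (hL1 : L.mulVec (fun _ => 1) = 0)
    (hL2 : Matrix.vecMul (fun _ => 1) L = 0)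
    (lam₂ : ℝ) (hlam₂ : 0 < lam₂)
    (hgap : ∀ v : Fin N → ℝ, ∑ i, v i = 0 →
      lam₂ * (v ⬝ᵥ v) ≤ v ⬝ᵥ ((((2:ℝ)⁻¹) • (L + Lᵀ)).mulVec v))
    (κ : ℝ) (hκ : κ > (ι ^ 2 / ε + ι) / lam₂)
    (Xt : Stacked n) (hXt : ∀ i, Xt i = xstar)
    (G : Stacked n → Stacked n)
    (hG : ∀ X i, G X i = -blockEmb n i (Fp i (X i)) - κ • ∑ j, L i j • X j) :
    ∃ lam > 0, ∀ t₀ : ℝ, ∀ x : ℝ → Stacked n,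
      (∀ t, t₀ ≤ t → HasDerivAt x (G (x t)) t) →
      ∀ t, t₀ ≤ t → ‖x t - Xt‖ ≤ Real.exp (-lam * (t - t₀)) * ‖x t₀ - Xt‖ := by
  -- constants
  have hNR : (0:ℝ) < (N:ℝ) := by exact_mod_cast Nat.lt_of_lt_of_le Nat.zero_lt_one hN
  have hNR1 : (1:ℝ) ≤ (N:ℝ) := by exact_mod_cast hN
  set C : ℝ := κ * lam₂ - ι with hC
  have hκlam : ι ^ 2 / ε + ι < κ * lam₂ := (div_lt_iff₀ hlam₂).mp hκ
  have hCgt : ι ^ 2 / ε < C := by rw [hC]; linarith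
  have hCpos : 0 < C := lt_trans (div_pos (pow_pos hι 2) hε) hCgt
  have hεC : ι ^ 2 < ε * C := by
    have := (div_lt_iff₀ hε).mp hCgt
    linarith
  have hεCpos : 0 < ε + C := by linarith
  set δ : ℝ := min (ε/2) ((ε * C - ι ^ 2) / (ε + C)) with hδ
  have hδpos : 0 < δ := lt_min (by linarith) (div_pos (by linarith) hεCpos)
  have hδε2 : δ ≤ ε / 2 := min_le_left _ _
  have hδle : δ * (ε + C) ≤ ε * C - ι ^ 2 := by
    have h := min_le_right (ε/2) ((ε * C - ι ^ 2) / (ε + C))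
    calc δ * (ε + C) ≤ (ε * C - ι ^ 2) / (ε + C) * (ε + C) := by
          apply mul_le_mul_of_nonneg_right _ hεCpos.le
          exact h
      _ = ε * C - ι ^ 2 := by field_simp
  have hδC : δ < C := by nlinarith only [hδle, hεC, hεCpos, hCpos, sq_nonneg ι, mul_pos hι hι]
  have hkey : ι ^ 2 ≤ (ε - δ) * (C - δ) := by nlinarith only [hδle, sq_nonneg δ]
  have hκpos : 0 < κ := by
    have h0 : 0 < (ι ^ 2 / ε + ι) / lam₂ :=
      div_pos (by positivity) hlam₂
    linarith
  -- row and column sums of L vanish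
  have hrow : ∀ i, ∑ j, L i j = 0 := by
    intro i
    have h := congrFun hL1 i
    simpa [Matrix.mulVec, dotProduct] using h
  have hcol : ∀ j, ∑ i, L i j = 0 := by
    intro j
    have h := congrFun hL2 j
    simpa [Matrix.vecMul, dotProduct] using h
  have hFpstar : ∀ i, Fp i xstar = 0 := by
    intro i
    have h := hFdef xstar i
    rw [hstar] at h
    exact h.symm
  refine ⟨δ / (N:ℝ), div_pos hδpos hNR, ?_⟩
  set c : ℝ := δ / (N:ℝ) with hc
  have hcpos : 0 < c := div_pos hδpos hNR
  -- the dissipativity estimate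
  have hdis : ∀ X : Stacked n, ⟪X - Xt, G X⟫ ≤ -c * ‖X - Xt‖ ^ 2 := by
    intro X
    set ebar : GSpace n := (N:ℝ)⁻¹ • ∑ i, (X i - xstar) with hebar
    set d : Fin N → GSpace n := fun i => X i - xstar - ebar with hdd
    set xhat : GSpace n := xstar + ebar with hxhat
    set b : GSpace n := WithLp.toLp 2 (fun i => Fp i (X i) - Fp i xhat) with hb
    set w : GSpace n := WithLp.toLp 2 (fun i => d i i) with hw
    set p : ℝ := ‖ebar‖ with hp
    set q : ℝ := Real.sqrt (∑ i, ‖d i‖ ^ 2) with hq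
    have hq0 : 0 ≤ q := Real.sqrt_nonneg _
    have hp0 : 0 ≤ p := norm_nonneg _
    have hq2 : q ^ 2 = ∑ i, ‖d i‖ ^ 2 :=
      Real.sq_sqrt (Finset.sum_nonneg fun i _ => sq_nonneg _)
    have hsumd : ∑ i, d i = 0 := by
      have h1 : ∑ i, d i = (∑ i, (X i - xstar)) - (N:ℝ) • ebar := by
        simp only [hdd]
        rw [Finset.sum_sub_distrib, Finset.sum_const, Finset.card_univ, Fintype.card_fin]
        rw [← Nat.cast_smul_eq_nsmul ℝ N ebar]
      rw [h1, hebar, smul_smul, mul_inv_cancel₀ (ne_of_gt hNR), one_smul, sub_self]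
    have hXi : ∀ i, X i - xstar = ebar + d i := by
      intro i; simp only [hdd]; abel
    have hxs : xhat - xstar = ebar := by simp only [hxhat]; abel
    have hEi : ∀ i : Fin N, (X - Xt) i = ebar + d i := by
      intro i
      have h : (X - Xt) i = X i - Xt i := rfl
      rw [h, hXt i, hXi i]
    -- the main algebraic identity
    have hGXi : ∀ i, G X i = -blockEmb n i (Fp i (X i)) - κ • ∑ j, L i j • (ebar + d j) := by
      intro i
      rw [hG]
      congr 1
      congr 1
      have hterm : ∀ j, L i j • X j = L i j • (ebar + d j) + L i j • xstar := by
        intro j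
        rw [← smul_add]
        congr 1
        have := hXi j
        rw [← this]; abel
      rw [Finset.sum_congr rfl fun j _ => hterm j, Finset.sum_add_distrib,
        ← Finset.sum_smul, hrow i, zero_smul, add_zero]
    have hinner_i : ∀ i, ⟪(X - Xt) i, G X i⟫ =
        -⟪ebar i + w i, (F xhat - F xstar) i + b i⟫ -
          κ * ∑ j, L i j * ⟪ebar + d i, ebar + d j⟫ := by
      intro i
      rw [hEi i, hGXi i, inner_sub_right, inner_neg_right, real_inner_smul_right, inner_sum]
      rw [aux_inner_blockEmb]
      congr 2
      · -- ⟪(ebar + d i) i, Fp i (X i)⟫ = ⟪ebar i + w i, (F xhat - F xstar) i + b i⟫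
        have hfst : (ebar + d i) i = ebar i + w i := rfl
        have hsnd : (F xhat - F xstar) i + b i = Fp i (X i) := by
          have h1 : (F xhat - F xstar) i = Fp i xhat - Fp i xstar := by
            have h0 : (F xhat - F xstar) i = F xhat i - F xstar i := rfl
            rw [h0, hFdef, hFdef]
          have h2 : b i = Fp i (X i) - Fp i xhat := rfl
          rw [h1, h2, hFpstar i]
          abel
        rw [hfst, hsnd]
      · exact Finset.sum_congr rfl fun j _ => real_inner_smul_right _ _ _
    have hmain : ⟪X - Xt, G X⟫ =
        -⟪ebar + w, (F xhat - F xstar) + b⟫ -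
          κ * ∑ i, ∑ j, L i j * ⟪ebar + d i, ebar + d j⟫ := by
      rw [PiLp.inner_apply]
      rw [Finset.sum_congr rfl fun i _ => hinner_i i]
      rw [Finset.sum_sub_distrib, Finset.sum_neg_distrib, ← Finset.mul_sum]
      congr 2
    -- bounds on the four inner-product pieces
    have hbLip : ∀ i, ‖b i‖ ≤ ι * ‖d i‖ := by
      intro i
      have h1 : b i = Fp i (X i) - Fp i xhat := rfl
      have h2 := hFpLip i (X i) xhat
      have h3 : X i - xhat = d i := by simp only [hdd, hxhat]; abel
      rw [h3] at h2
      rw [h1]; exact h2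
    have hbq : ‖b‖ ≤ ι * q := by
      apply aux_le_of_sq_le_sq (mul_nonneg hι.le hq0) _ (norm_nonneg _)
      rw [aux_norm_sq_piLp b, mul_pow, hq2, Finset.mul_sum]
      refine Finset.sum_le_sum fun i _ => ?_
      have hthis := hbLip i
      nlinarith only [hthis, norm_nonneg (b i), norm_nonneg (d i), hι.le]
    have hwq : ‖w‖ ≤ q := by
      apply aux_le_of_sq_le_sq hq0 _ (norm_nonneg _)
      rw [aux_norm_sq_piLp w, hq2]
      refine Finset.sum_le_sum fun i _ => ?_
      have h1 : ‖w i‖ ^ 2 = ∑ k, (d i i k) ^ 2 := by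
        rw [← real_inner_self_eq_norm_sq]
        show ⟪d i i, d i i⟫ = _
        rw [PiLp.inner_apply]
        exact Finset.sum_congr rfl fun k _ => by rw [real_inner_self_eq_norm_sq, Real.norm_eq_abs, sq_abs]
      rw [h1, aux_norm_sq_gspace (d i)]
      exact Finset.single_le_sum (f := fun j => ∑ k, (d i j k) ^ 2)
        (fun j _ => Finset.sum_nonneg fun k _ => sq_nonneg _) (Finset.mem_univ i)
    have hFd : ‖F xhat - F xstar‖ ≤ ι * p := by
      have := hFLip xhat xstar
      rwa [hxs] at this
    have h1 : ε * p ^ 2 ≤ ⟪ebar, F xhat - F xstar⟫ := by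
      have := hmono xhat xstar
      rwa [hxs] at this
    have h2 : -(ι * (p * q)) ≤ ⟪ebar, b⟫ := by
      have ha := aux_inner_ge_neg ebar b
      have hm : ‖ebar‖ * ‖b‖ ≤ p * (ι * q) :=
        mul_le_mul_of_nonneg_left hbq hp0
      linarith only [ha, hm]
    have h3 : -(ι * (p * q)) ≤ ⟪w, F xhat - F xstar⟫ := by
      have ha := aux_inner_ge_neg w (F xhat - F xstar)
      have hm : ‖w‖ * ‖F xhat - F xstar‖ ≤ q * (ι * p) :=
        mul_le_mul hwq hFd (norm_nonneg _) hq0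
      linarith only [ha, hm]
    have h4 : -(ι * (q * q)) ≤ ⟪w, b⟫ := by
      have ha := aux_inner_ge_neg w b
      have hm : ‖w‖ * ‖b‖ ≤ q * (ι * q) :=
        mul_le_mul hwq hbq (norm_nonneg _) hq0
      linarith only [ha, hm]
    have hT1 : ε * p ^ 2 - ι * (p * q) - ι * (p * q) - ι * (q * q) ≤
        ⟪ebar + w, (F xhat - F xstar) + b⟫ := by
      rw [inner_add_left, inner_add_right, inner_add_right]
      linarith only [h1, h2, h3, h4]
    -- Laplacian / consensus term
    have hTT : ∑ i, ∑ j, L i j * ⟪ebar + d i, ebar + d j⟫ =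
        ∑ i, ∑ j, L i j * ⟪d i, d j⟫ := by
      have hexp : ∀ i j : Fin N, L i j * ⟪ebar + d i, ebar + d j⟫ =
          L i j * ⟪d i, d j⟫ + (L i j * ⟪ebar, ebar⟫ + L i j * ⟪ebar, d j⟫ +
            L i j * ⟪d i, ebar⟫) := by
        intro i j
        rw [inner_add_left, inner_add_right, inner_add_right]
        ring
      rw [Finset.sum_congr rfl fun i _ => Finset.sum_congr rfl fun j _ => hexp i j]
      have e1 : ∑ i, ∑ j, (L i j * ⟪d i, d j⟫ + (L i j * ⟪ebar, ebar⟫ +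
          L i j * ⟪ebar, d j⟫ + L i j * ⟪d i, ebar⟫)) =
          (∑ i, ∑ j, L i j * ⟪d i, d j⟫) + ((∑ i, ∑ j, L i j * ⟪ebar, ebar⟫) +
            ((∑ i, ∑ j, L i j * ⟪ebar, d j⟫) + (∑ i, ∑ j, L i j * ⟪d i, ebar⟫))) := by
        rw [← Finset.sum_add_distrib, ← Finset.sum_add_distrib, ← Finset.sum_add_distrib]
        refine Finset.sum_congr rfl fun i _ => ?_
        rw [← Finset.sum_add_distrib, ← Finset.sum_add_distrib, ← Finset.sum_add_distrib]
        refine Finset.sum_congr rfl fun j _ => ?_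
        ring
      rw [e1]
      have z1 : ∑ i, ∑ j, L i j * ⟪ebar, ebar⟫ = 0 := by
        refine Finset.sum_eq_zero fun i _ => ?_
        rw [← Finset.sum_mul, hrow i, zero_mul]
      have z2 : ∑ i, ∑ j, L i j * ⟪ebar, d j⟫ = 0 := by
        rw [Finset.sum_comm]
        refine Finset.sum_eq_zero fun j _ => ?_
        rw [← Finset.sum_mul, hcol j, zero_mul]
      have z3 : ∑ i, ∑ j, L i j * ⟪d i, ebar⟫ = 0 := by
        refine Finset.sum_eq_zero fun i _ => ?_
        rw [← Finset.sum_mul, hrow i, zero_mul]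
      rw [z1, z2, z3]
      ring
    have hT2 : lam₂ * q ^ 2 ≤ ∑ i, ∑ j, L i j * ⟪ebar + d i, ebar + d j⟫ := by
      rw [hTT, hq2]
      exact aux_gap_vec L lam₂ hgap d hsumd
    -- norm decomposition
    have hnorm : ‖X - Xt‖ ^ 2 = (N:ℝ) * p ^ 2 + q ^ 2 := by
      rw [aux_norm_sq_piLp (X - Xt)]
      have hterm : ∀ i, ‖(X - Xt) i‖ ^ 2 = p ^ 2 + 2 * ⟪ebar, d i⟫ + ‖d i‖ ^ 2 := by
        intro i
        rw [hEi i, hp]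
        exact norm_add_sq_real _ _
      rw [Finset.sum_congr rfl fun i _ => hterm i]
      rw [Finset.sum_add_distrib, Finset.sum_add_distrib, Finset.sum_const,
        Finset.card_univ, Fintype.card_fin, nsmul_eq_mul]
      have hz : ∑ i, 2 * ⟪ebar, d i⟫ = 0 := by
        rw [← Finset.mul_sum, ← inner_sum, hsumd, inner_zero_right, mul_zero]
      rw [hz, hq2, add_zero]
    -- final quadratic-form estimate
    rw [hmain, hnorm]
    have hκT2 : κ * (lam₂ * q ^ 2) ≤ κ * ∑ i, ∑ j, L i j * ⟪ebar + d i, ebar + d j⟫ :=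
      mul_le_mul_of_nonneg_left hT2 hκpos.le
    have hεδ : 0 < ε - δ := by linarith
    have hquad : 0 ≤ (ε - δ) * p ^ 2 - 2 * ι * (p * q) + (C - δ) * q ^ 2 := by
      nlinarith only [sq_nonneg ((ε - δ) * p - ι * q),
        mul_nonneg (sub_nonneg.mpr hkey) (sq_nonneg q), hεδ, sq_nonneg q, sq_nonneg p]
    have hNq : c * q ^ 2 ≤ δ * q ^ 2 := by
      apply mul_le_mul_of_nonneg_right _ (sq_nonneg q)
      exact div_le_self hδpos.le hNR1
    have hNp : c * ((N:ℝ) * p ^ 2) = δ * p ^ 2 := by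
      rw [hc]; field_simp
    have hCq : κ * (lam₂ * q ^ 2) = C * q ^ 2 + ι * q ^ 2 := by
      rw [hC]; ring
    have hgoal2 : c * ((N:ℝ) * p ^ 2 + q ^ 2) ≤
        ε * p ^ 2 - ι * (p * q) - ι * (p * q) - ι * (q * q) + κ * (lam₂ * q ^ 2) := by
      have hexpand : c * ((N:ℝ) * p ^ 2 + q ^ 2) = c * ((N:ℝ) * p ^ 2) + c * q ^ 2 := by ring
      rw [hexpand, hNp]
      linarith only [hquad, hNq, hCq]
    have hle1 : -⟪ebar + w, (F xhat - F xstar) + b⟫ ≤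
        -(ε * p ^ 2 - ι * (p * q) - ι * (p * q) - ι * (q * q)) := neg_le_neg hT1
    have hle2 : -(κ * ∑ i, ∑ j, L i j * ⟪ebar + d i, ebar + d j⟫) ≤
        -(κ * (lam₂ * q ^ 2)) := neg_le_neg hκT2
    linarith only [hle1, hle2, hgoal2]
  intro t₀ x hx t ht
  exact aux_gronwall G Xt c hcpos hdis t₀ x hx t ht
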